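/- If m ≥ 12 is a highly composite number with largest prime factor q and exponent β of 2 in m, then 2^β < 8 q^2. -/

import Mathlib

/-- `d n`: number of positive divisors of `n`. -/
def d (n : ℕ) : ℕ := (Nat.divisors n).card

/-- A positive integer `n` is highly composite if every smaller positive
integer has strictly fewer divisors. -/
def HighlyComposite (n : ℕ) : Prop :=
  0 < n ∧ ∀ m : ℕ, 0 < m → m < n → d m < d n

lemma d_mul {a b : ℕ} (h : Nat.Coprime a b) : d (a * b) = d a * d b :=
  Nat.Coprime.card_divisors_mul h

lemma d_prime_pow {p : ℕ} (pp : p.Prime) (a : ℕ) : d (p ^ a) = a + 1 := by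
  simp [d, Nat.divisors_prime_pow pp]

/-- If m ≥ 12 is highly composite with largest prime factor q and
2-exponent β, then 2^β < 8 q². -/
theorem stmt_7 (m : ℕ) (h12 : 12 ≤ m) (hm : HighlyComposite m)
    (q : ℕ) (hq : q.Prime) (hqdvd : q ∣ m)
    (hmax : ∀ p : ℕ, p.Prime → p ∣ m → p ≤ q) :
    2 ^ (m.factorization 2) < 8 * q ^ 2 := by
  by_contra hcon
  push_neg at hcon
  set β := m.factorization 2 with hβdef
  have hm0 : 0 < m := hm.1
  have hq2 : 2 ≤ q := hq.two_le
  obtain ⟨p, pp, hqp, hp2q⟩ := Nat.exists_prime_lt_and_le_two_mul q (by omega)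
  set k := Nat.log 2 p + 1 with hk
  have hpk : p < 2 ^ k := Nat.lt_pow_succ_log_self (by norm_num) p
  have hkp : 2 ^ (k - 1) ≤ p := by
    simpa [hk] using Nat.pow_log_le_self 2 (by omega : p ≠ 0)
  have h2k : 2 ^ k ≤ 4 * q := by
    have h1 : 2 ^ k = 2 * 2 ^ (k - 1) := by
      rw [hk]; simp [pow_succ, mul_comm]
    omega
  have hβ2k : 2 * k ≤ β + 1 := by
    have h1 : 2 ^ (2 * k) ≤ 2 ^ (β + 1) := by
      calc 2 ^ (2 * k) = (2 ^ k) ^ 2 := by rw [← pow_mul, mul_comm]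
        _ ≤ (4 * q) ^ 2 := Nat.pow_le_pow_left h2k 2
        _ = 2 * (8 * q ^ 2) := by ring
        _ ≤ 2 * 2 ^ β := by omega
        _ = 2 ^ (β + 1) := by rw [pow_succ, mul_comm]
    exact (Nat.pow_le_pow_iff_right (by norm_num)).mp h1
  have hβ5 : 5 ≤ β := by
    have : 32 ≤ 2 ^ β := by nlinarith
    by_contra h
    interval_cases β <;> omega
  have hkβ : k ≤ β := by omega
  set D := ordCompl[2] m with hD
  have hmD : 2 ^ β * D = m := Nat.ordProj_mul_ordCompl_eq_self m 2
  have hD0 : 0 < D := Nat.ordCompl_pos 2 hm0.ne'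
  have h2D : ¬ 2 ∣ D := Nat.not_dvd_ordCompl Nat.prime_two hm0.ne'
  have hpm : ¬ p ∣ m := fun h => absurd (hmax p pp h) (by omega)
  have hpD : ¬ p ∣ D := fun h => hpm (h.trans (Nat.ordCompl_dvd m 2))
  have hp2 : p ≠ 2 := by omega
  set m' := 2 ^ (β - k) * (D * p) with hm'def
  have hm'0 : 0 < m' := Nat.mul_pos (Nat.pow_pos two_pos) (Nat.mul_pos hD0 pp.pos)
  have hm'lt : m' < m := by
    rw [← hmD]
    calc 2 ^ (β - k) * (D * p) < 2 ^ (β - k) * (D * 2 ^ k) := by gcongr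
      _ = 2 ^ (β - k) * 2 ^ k * D := by ring
      _ = 2 ^ β * D := by rw [← pow_add]; congr 2; omega
  -- coprimality facts
  have cop2D : Nat.Coprime 2 D := (Nat.Prime.coprime_iff_not_dvd Nat.prime_two).mpr h2D
  have cop2p : Nat.Coprime 2 p := (Nat.coprime_primes Nat.prime_two pp).mpr (fun h => hp2 h.symm)
  have copDp : Nat.Coprime D p := ((pp.coprime_iff_not_dvd).mpr hpD).symm
  have hdm : d m = (β + 1) * d D := by
    rw [← hmD, d_mul (Nat.Coprime.pow_left β cop2D), d_prime_pow Nat.prime_two β]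
  have hdm' : d m' = (β - k + 1) * (d D * 2) := by
    have hdp : d p = 2 := by simpa using d_prime_pow pp 1
    rw [hm'def, d_mul (Nat.Coprime.pow_left (β - k) (Nat.Coprime.mul_right cop2D cop2p)),
      d_mul copDp, d_prime_pow Nat.prime_two (β - k), hdp]
  have hDd : 0 < d D := by
    simp only [d, Finset.card_pos]
    exact ⟨1, Nat.one_mem_divisors.mpr hD0.ne'⟩
  have hlt := hm.2 m' hm'0 hm'lt
  rw [hdm, hdm'] at hlt
  have hcoef : β + 1 ≤ (β - k + 1) * 2 := by omega
  nlinarith
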